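/- Let E be a real inner product space, p ≥ 1 an integer, and S : E^p → ℝ a continuous symmetric p-multilinear form. Then the supremum of |S[v, ..., v]| over unit vectors v ∈ E equals the operator norm of S, i.e. sup_{‖v‖=1} |S[v]^p| = sup_{‖v_1‖ = ... = ‖v_p‖ = 1} |S[v_1, ..., v_p]|. -/

import Mathlib

open Function Finset
open scoped RealInnerProductSpace

section Aux
variable {E : Type*} [NormedAddCommGroup E]

lemma sum_update_univ' {E : Type*} [AddCommGroup E] {p : ℕ} (m : Fin p → E) (k : Fin p) (x : E) :
    ∑ i, update m k x i = ∑ i, m i - m k + x := by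
  rw [Finset.sum_update_of_mem (Finset.mem_univ k)]
  rw [Finset.sum_eq_sum_sdiff_singleton_add (Finset.mem_univ k) m]
  abel
end Aux

lemma merge_arith (P Q N c r : ℝ) (hN : 0 ≤ N)
    (hPa : |P| ≤ N * r^2) (hPb : |Q| ≤ N * (4 - r^2))
    (hPQ : P - Q = 4 * c) (hc : |c| = N) : P = c * r^2 := by
  rcases (abs_eq hN).1 hc with h | h
  · have ha := abs_le.1 hPa
    have hb := abs_le.1 hPb
    subst h; nlinarith [ha.1, ha.2, hb.1, hb.2]
  · have ha := abs_le.1 hPa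
    have hb := abs_le.1 hPb
    rw [h]; nlinarith [ha.1, ha.2, hb.1, hb.2]

lemma banach_key {E : Type*} [NormedAddCommGroup E] [InnerProductSpace ℝ E]
    [FiniteDimensional ℝ E]
    (p : ℕ) (hp : 1 ≤ p)
    (S : ContinuousMultilinearMap ℝ (fun _ : Fin p => E) ℝ)
    (hsymm : ∀ (σ : Equiv.Perm (Fin p)) (v : Fin p → E), S (fun i => v (σ i)) = S v)
    (v : Fin p → E) (hv : ∀ i, ‖v i‖ = 1) :
    ∃ x : E, ‖x‖ = 1 ∧ |S v| ≤ |S (fun _ => x)| := by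
  classical
  set C : Set (Fin p → E) := Set.univ.pi (fun _ => Metric.sphere (0:E) 1) with hC
  have hmemC : ∀ w : Fin p → E, w ∈ C ↔ ∀ i, ‖w i‖ = 1 := by
    intro w
    simp [hC, Set.mem_univ_pi, mem_sphere_iff_norm]
  have hCcomp : IsCompact C := isCompact_univ_pi (fun _ => isCompact_sphere 0 1)
  have hvC : v ∈ C := (hmemC v).2 hv
  have hfc : Continuous (fun w : Fin p → E => |S w|) := S.cont.abs
  obtain ⟨w₀, hw₀C, hw₀max⟩ := hCcomp.exists_isMaxOn ⟨v, hvC⟩ hfc.continuousOn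
  set N : ℝ := |S w₀| with hN
  have hNnonneg : 0 ≤ N := abs_nonneg _
  have hNbound : ∀ w ∈ C, |S w| ≤ N := fun w hw => hw₀max hw
  set K : Set (Fin p → E) := C ∩ {w | |S w| = N} with hK
  have hKcomp : IsCompact K := hCcomp.inter_right (isClosed_eq hfc continuous_const)
  have hKne : K.Nonempty := ⟨w₀, hw₀C, rfl⟩
  have hΦc : Continuous (fun w : Fin p → E => ‖∑ i, w i‖^2) := by fun_prop
  obtain ⟨w, hwK, hwmax⟩ := hKcomp.exists_isMaxOn hKne hΦc.continuousOn
  have hwC : w ∈ C := hwK.1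
  have hwN : |S w| = N := hwK.2
  have hwunit : ∀ i, ‖w i‖ = 1 := (hmemC w).1 hwC
  set s : E := ∑ i, w i with hs
  -- Step (a): sign flips give ⟪s, w k⟫ ≥ 1
  have hstep_a : ∀ k, 1 ≤ ⟪s, w k⟫ := by
    intro k
    set w' : Fin p → E := update w k (-(w k)) with hw'
    have hw'C : w' ∈ C := (hmemC _).2 (fun i => by
      rcases eq_or_ne i k with rfl | h
      · simp [hw', hwunit]
      · simp [hw', Function.update_of_ne h, hwunit])
    have hSw' : |S w'| = N := by
      have h1 : S w' = - S w := by
        have h2 : (-(w k)) = (-1 : ℝ) • w k := by simp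
        rw [hw', h2, S.map_update_smul, Function.update_eq_self]
        simp
      rw [h1, abs_neg, hwN]
    have hΦ : ‖∑ i, w' i‖^2 ≤ ‖s‖^2 := hwmax ⟨hw'C, hSw'⟩
    have hsum : ∑ i, w' i = s - (2:ℝ) • w k := by
      rw [hw', sum_update_univ']
      rw [← hs]
      module
    rw [hsum, norm_sub_sq_real, real_inner_smul_right, norm_smul] at hΦ
    have hnk : ‖w k‖ = 1 := hwunit k
    rw [hnk] at hΦ
    simp at hΦ
    nlinarith [hΦ]
  -- Step (b): all coordinates of the maximizer are equal
  have hstep_b : ∀ i j : Fin p, i ≠ j → w i = w j := by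
    intro i j hij
    by_contra hne
    have h1 : 1 ≤ ⟪s, w i⟫ := hstep_a i
    have h2 : 1 ≤ ⟪s, w j⟫ := hstep_a j
    have hab_ne : w i + w j ≠ 0 := by
      intro h
      have hba : w j = -(w i) := by
        have := eq_neg_of_add_eq_zero_right h
        exact this
      rw [hba, inner_neg_right] at h2
      linarith
    set r : ℝ := ‖w i + w j‖ with hr
    have hrpos : 0 < r := norm_pos_iff.2 hab_ne
    have hsubne : w i - w j ≠ 0 := sub_ne_zero.2 hne
    have hinner_lt : ⟪w i, w j⟫ < 1 := by
      have h3 : (0:ℝ) < ‖w i - w j‖ := norm_pos_iff.2 hsubne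
      have h4 : ‖w i - w j‖^2 = 2 - 2 * ⟪w i, w j⟫ := by
        rw [norm_sub_sq_real, hwunit i, hwunit j]; ring
      nlinarith
    have hr2 : r^2 = 2 + 2 * ⟪w i, w j⟫ := by
      rw [hr, norm_add_sq_real, hwunit i, hwunit j]; ring
    have hsub2 : ‖w i - w j‖^2 = 4 - r^2 := by
      rw [norm_sub_sq_real, hwunit i, hwunit j, hr2]; ring
    have hrlt2 : r < 2 := by nlinarith
    set u : E := r⁻¹ • (w i + w j) with hu
    have huunit : ‖u‖ = 1 := by
      rw [hu, norm_smul, ← hr, norm_inv, Real.norm_eq_abs, abs_of_pos hrpos]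
      exact inv_mul_cancel₀ (ne_of_gt hrpos)
    -- the bilinear form in slots i and j
    set B : E → E → (Fin p → E) := fun x y => update (update w i x) j y with hB
    have hij' : j ≠ i := hij.symm
    have hBsymm : ∀ x y, S (B x y) = S (B y x) := by
      intro x y
      have := hsymm (Equiv.swap i j) (B x y)
      have heq : (fun k => B x y (Equiv.swap i j k)) = B y x := by
        funext k
        rcases eq_or_ne k i with rfl | hki
        · simp [hB, Equiv.swap_apply_left, Function.update_of_ne hij',
            Function.update_self, Function.update_of_ne hij]
        rcases eq_or_ne k j with rfl | hkj
        · simp [hB, Equiv.swap_apply_right, Function.update_of_ne hij,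
            Function.update_self, Function.update_of_ne hij']
        · simp [hB, Equiv.swap_apply_of_ne_of_ne hki hkj,
            Function.update_of_ne hki, Function.update_of_ne hkj]
      rw [heq] at this
      exact this.symm
    have hBsmul_right : ∀ x (c : ℝ) y, S (B x (c • y)) = c * S (B x y) := by
      intro x c y
      simp only [hB]
      rw [S.map_update_smul]
      simp
    have hBsmul_left : ∀ (c : ℝ) x y, S (B (c • x) y) = c * S (B x y) := by
      intro c x y
      simp only [hB]
      rw [Function.update_comm hij, S.map_update_smul, ← Function.update_comm hij]
      simp
    have hBadd_right : ∀ x y z, S (B x (y + z)) = S (B x y) + S (B x z) := by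
      intro x y z
      simp only [hB]
      rw [S.map_update_add]
    have hBsub_right : ∀ x y z, S (B x (y - z)) = S (B x y) - S (B x z) := by
      intro x y z
      simp only [hB]
      rw [S.map_update_sub]
    have hBadd_left : ∀ x y z, S (B (x + y) z) = S (B x z) + S (B y z) := by
      intro x y z
      simp only [hB]
      rw [Function.update_comm hij, S.map_update_add, ← Function.update_comm hij,
        ← Function.update_comm hij]
    have hBsub_left : ∀ x y z, S (B (x - y) z) = S (B x z) - S (B y z) := by
      intro x y z
      simp only [hB]
      rw [Function.update_comm hij, S.map_update_sub, ← Function.update_comm hij,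
        ← Function.update_comm hij]
    have hB_self : S (B (w i) (w j)) = S w := by
      simp only [hB]
      rw [Function.update_eq_self, Function.update_eq_self]
    have hBunitC : ∀ x y : E, ‖x‖ = 1 → ‖y‖ = 1 → B x y ∈ C := by
      intro x y hx hy
      refine (hmemC _).2 (fun k => ?_)
      rcases eq_or_ne k j with rfl | hkj
      · simp [hB, Function.update_self, hy]
      rcases eq_or_ne k i with rfl | hki
      · simp [hB, Function.update_of_ne hkj, Function.update_self, hx]
      · simp [hB, Function.update_of_ne hkj, Function.update_of_ne hki, hwunit]
    have hBbound : ∀ z : E, z ≠ 0 → |S (B z z)| ≤ N * ‖z‖^2 := by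
      intro z hz
      have hzpos : (0:ℝ) < ‖z‖ := norm_pos_iff.2 hz
      have hzz : z = ‖z‖ • (‖z‖⁻¹ • z) := by
        rw [smul_smul, mul_inv_cancel₀ (ne_of_gt hzpos), one_smul]
      have hcalc : S (B z z) = ‖z‖^2 * S (B (‖z‖⁻¹ • z) (‖z‖⁻¹ • z)) := by
        conv_lhs => rw [hzz]
        rw [hBsmul_left, hBsmul_right]
        ring
      have hzu : ‖(‖z‖⁻¹ • z)‖ = 1 := by
        rw [norm_smul, norm_inv, Real.norm_eq_abs, abs_of_pos hzpos]
        exact inv_mul_cancel₀ (ne_of_gt hzpos)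
      have hbd := hNbound _ (hBunitC _ _ hzu hzu)
      rw [hcalc, abs_mul, abs_of_nonneg (by positivity : (0:ℝ) ≤ ‖z‖^2)]
      calc ‖z‖^2 * |S (B (‖z‖⁻¹ • z) (‖z‖⁻¹ • z))| ≤ ‖z‖^2 * N := by
            exact mul_le_mul_of_nonneg_left hbd (by positivity)
        _ = N * ‖z‖^2 := by ring
    -- parallelogram identity forces the merged tuple to be a maximizer
    have hPQ : S (B (w i + w j) (w i + w j)) - S (B (w i - w j) (w i - w j)) = 4 * S w := by
      rw [hBadd_left, hBadd_right, hBadd_right, hBsub_left, hBsub_right, hBsub_right,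
        hBsymm (w j) (w i), hB_self]
      ring
    have hPa := hBbound (w i + w j) hab_ne
    have hPb := hBbound (w i - w j) hsubne
    rw [← hr] at hPa
    have hnormsub : ‖w i - w j‖^2 = 4 - r^2 := hsub2
    rw [hnormsub] at hPb
    have hPval : S (B (w i + w j) (w i + w j)) = S w * r^2 :=
      merge_arith _ _ N (S w) r hNnonneg hPa hPb hPQ hwN
    have hr0 : r ≠ 0 := ne_of_gt hrpos
    have hBuu : S (B u u) = S w := by
      rw [hu, hBsmul_left, hBsmul_right, hPval, pow_two]
      rw [show r⁻¹ * (r⁻¹ * (S w * (r * r))) = S w * ((r⁻¹ * r) * (r⁻¹ * r)) from by ring,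
        inv_mul_cancel₀ hr0]
      ring
    -- the merged tuple
    have hw'K : B u u ∈ K :=
      ⟨hBunitC u u huunit huunit, show |S (B u u)| = N by rw [hBuu]; exact hwN⟩
    have hΦle : ‖∑ k, B u u k‖^2 ≤ ‖s‖^2 := hwmax hw'K
    have hsum' : ∑ k, B u u k = s + (2 * r⁻¹ - 1) • (w i + w j) := by
      simp only [hB]
      rw [sum_update_univ', sum_update_univ']
      rw [Function.update_of_ne hij', ← hs, hu]
      module
    set c₂ : ℝ := 2 * r⁻¹ - 1 with hc₂
    have hc₂pos : 0 < c₂ := by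
      have hlt : (1:ℝ) < 2 / r := (one_lt_div hrpos).2 hrlt2
      rw [div_eq_mul_inv] at hlt
      rw [hc₂]; linarith
    have hexp : ‖∑ k, B u u k‖^2 = ‖s‖^2 + 2 * (c₂ * (⟪s, w i⟫ + ⟪s, w j⟫)) + c₂^2 * r^2 := by
      rw [hsum', norm_add_sq_real, real_inner_smul_right, inner_add_right, norm_smul,
        ← hr, mul_pow, Real.norm_eq_abs, abs_of_pos hc₂pos]
    nlinarith [hΦle, hexp, mul_pos hc₂pos hc₂pos, mul_pos hrpos hrpos,
      mul_le_mul_of_nonneg_left (add_le_add h1 h2) (le_of_lt hc₂pos)]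
  -- conclude
  set x : E := w ⟨0, hp⟩ with hx
  refine ⟨x, hwunit _, ?_⟩
  have hweq : w = fun _ => x := by
    funext i
    rcases eq_or_ne i ⟨0, hp⟩ with rfl | hi
    · rfl
    · exact hstep_b i ⟨0, hp⟩ hi
  calc |S v| ≤ N := hNbound v hvC
    _ = |S w| := hwN.symm
    _ = |S (fun _ => x)| := by rw [hweq]


/-- **Banach's theorem for symmetric tensors.**  For a continuous symmetric
`p`-multilinear form `S` on a real inner product space `E` (with `p ≥ 1`), the
supremum of `|S[v, …, v]|` over unit vectors equals the supremum of
`|S[v₁, …, v_p]|` over `p`-tuples of unit vectors (the operator norm). -/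
theorem banach_symmetric_tensor_norm
    {E : Type*} [NormedAddCommGroup E] [InnerProductSpace ℝ E]
    (p : ℕ) (hp : 1 ≤ p)
    (S : ContinuousMultilinearMap ℝ (fun _ : Fin p => E) ℝ)
    (hsymm : ∀ (σ : Equiv.Perm (Fin p)) (v : Fin p → E), S (fun i => v (σ i)) = S v) :
    sSup {y : ℝ | ∃ v : E, ‖v‖ = 1 ∧ y = |S (fun _ => v)|}
      = sSup {y : ℝ | ∃ v : Fin p → E, (∀ i, ‖v i‖ = 1) ∧ y = |S v|} := by
  classical
  set A : Set ℝ := {y : ℝ | ∃ v : E, ‖v‖ = 1 ∧ y = |S (fun _ => v)|} with hA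
  set Bs : Set ℝ := {y : ℝ | ∃ v : Fin p → E, (∀ i, ‖v i‖ = 1) ∧ y = |S v|} with hBs
  by_cases hE : ∃ x : E, ‖x‖ = 1
  · obtain ⟨e, he⟩ := hE
    have hAB : A ⊆ Bs := by
      rintro y ⟨x, hx, rfl⟩
      exact ⟨fun _ => x, fun _ => hx, rfl⟩
    have hBbdd : BddAbove Bs := by
      refine ⟨‖S‖, ?_⟩
      rintro y ⟨v, hv, rfl⟩
      calc |S v| = ‖S v‖ := rfl
        _ ≤ ‖S‖ * ∏ i, ‖v i‖ := S.le_opNorm v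
        _ = ‖S‖ := by simp [hv]
    have hAbdd : BddAbove A := hBbdd.mono hAB
    have hAne : A.Nonempty := ⟨|S (fun _ => e)|, e, he, rfl⟩
    have hBne : Bs.Nonempty := ⟨|S (fun _ => e)|, hAB ⟨e, he, rfl⟩⟩
    apply le_antisymm
    · exact csSup_le_csSup hBbdd hAne hAB
    · refine csSup_le hBne ?_
      rintro y ⟨v, hv, rfl⟩
      set F := Submodule.span ℝ (Set.range v) with hF
      haveI : FiniteDimensional ℝ F := FiniteDimensional.span_of_finite ℝ (Set.finite_range v)
      set T : ContinuousMultilinearMap ℝ (fun _ : Fin p => F) ℝ :=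
        S.compContinuousLinearMap (fun _ => F.subtypeL) with hT
      have hTapp : ∀ w : Fin p → F, T w = S (fun i => (w i : E)) := fun w => rfl
      have hTsymm : ∀ (σ : Equiv.Perm (Fin p)) (w : Fin p → F),
          T (fun i => w (σ i)) = T w := by
        intro σ w
        rw [hTapp, hTapp]
        exact hsymm σ (fun i => (w i : E))
      set v' : Fin p → F := fun i => ⟨v i, Submodule.subset_span (Set.mem_range_self i)⟩ with hv'
      have hv'u : ∀ i, ‖v' i‖ = 1 := fun i => hv i
      obtain ⟨x, hx, hle⟩ := banach_key p hp T hTsymm v' hv'u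
      have h1 : |S v| = |T v'| := by rw [hTapp]
      have h2 : |T (fun _ => x)| = |S (fun _ => (x : E))| := by rw [hTapp]
      refine le_trans ?_ (le_csSup hAbdd ⟨(x : E), hx, rfl⟩)
      rw [h1, ← h2]
      exact hle
  · have hA0 : A = ∅ := by
      rw [hA, Set.eq_empty_iff_forall_notMem]
      rintro y ⟨x, hx, -⟩
      exact hE ⟨x, hx⟩
    have hB0 : Bs = ∅ := by
      rw [hBs, Set.eq_empty_iff_forall_notMem]
      rintro y ⟨v, hv, -⟩
      exact hE ⟨v ⟨0, hp⟩, hv _⟩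
    rw [hA0, hB0]
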